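/- arXiv:2108.02119 — 2 statements merged into one kernel-verified Lean document; each statement's English description precedes it below -/
import Mathlib

section
/- The DCT-IV matrix factors through the DCT-II: C^IV_N = A_N ⬝ C^II_N ⬝ D_N, where D_N = diag(2 cos((2n+1)π/(4N))) and A_N = J_N ⬝ tril(u_N ⬝ [√2/2, u_{N-1}ᵀ]) ⬝ J_N, i.e., [A_N]_{k,n} = (-1)^{k+n} t_{k,n} with t_{k,0} = √2/2 for k ≥ 0, t_{k,n} = 1 for 1 ≤ n ≤ k, and t_{k,n} = 0 for n > k. -/
open Real Matrix

noncomputable def dctII (N : Nat) : Matrix (Fin N) (Fin N) Real :=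
  Matrix.of fun k n => Real.sqrt (2 / N) *
    (if (k : Nat) = 0 then 1 / Real.sqrt 2 else 1) *
    Real.cos ((k : Nat) * (2 * (n : Nat) + 1) * Real.pi / (2 * N))

noncomputable def dctIV (N : Nat) : Matrix (Fin N) (Fin N) Real :=
  Matrix.of fun k n => Real.sqrt (2 / N) *
    Real.cos ((2 * (k : Nat) + 1) * (2 * (n : Nat) + 1) * Real.pi / (4 * N))

noncomputable def dstIV (N : Nat) : Matrix (Fin N) (Fin N) Real :=
  Matrix.of fun k n => Real.sqrt (2 / N) *
    Real.sin ((2 * (k : Nat) + 1) * (2 * (n : Nat) + 1) * Real.pi / (4 * N))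

def exI (N : Nat) : Matrix (Fin N) (Fin N) Real :=
  Matrix.of fun k n => if (k : Nat) + (n : Nat) = N - 1 then 1 else 0

def Jmat (N : Nat) : Matrix (Fin N) (Fin N) Real :=
  Matrix.diagonal fun n => (-1 : Real) ^ (n : Nat)

def pShuffle (N : Nat) : Matrix (Fin (2 * N)) (Fin (2 * N)) Real :=
  Matrix.of fun k n =>
    if (k : Nat) = (if (n : Nat) < N then 2 * (n : Nat) else (2 * (n : Nat)) % (2 * N) + 1)
    then 1 else 0

noncomputable def reix (N : Nat)
    (M : Matrix (Fin N ⊕ Fin N) (Fin N ⊕ Fin N) Real) :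
    Matrix (Fin (2 * N)) (Fin (2 * N)) Real :=
  Matrix.reindex (finSumFinEquiv.trans (finCongr (two_mul N).symm))
    (finSumFinEquiv.trans (finCongr (two_mul N).symm)) M

noncomputable def blk (N : Nat) (A B : Matrix (Fin N) (Fin N) Real) :
    Matrix (Fin (2 * N)) (Fin (2 * N)) Real :=
  reix N (Matrix.fromBlocks A 0 0 B)

noncomputable def butterfly (N : Nat) : Matrix (Fin (2 * N)) (Fin (2 * N)) Real :=
  reix N (Matrix.fromBlocks 1 (exI N) (exI N) (-1))

noncomputable def trilU (N : Nat) : Matrix (Fin N) (Fin N) Real :=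
  Matrix.of fun k n =>
    if (n : Nat) = 0 then Real.sqrt 2 / 2
    else if (n : Nat) ≤ (k : Nat) then 1 else 0

noncomputable def Amat (N : Nat) : Matrix (Fin N) (Fin N) Real :=
  Jmat N * trilU N * Jmat N

noncomputable def Dmat (N : Nat) : Matrix (Fin N) (Fin N) Real :=
  Matrix.diagonal fun n => 2 * Real.cos ((2 * (n : Nat) + 1) * Real.pi / (4 * N))

noncomputable def Gmat (N : Nat) : Matrix (Fin N) (Fin N) Real :=
  Matrix.diagonal fun n =>
    2 * (-1 : Real) ^ (n : Nat) * Real.cos ((2 * (n : Nat) + 1) * Real.pi / (4 * N))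

noncomputable def Bmat (N : Nat) : Matrix (Fin N) (Fin N) Real :=
  -(exI N * trilU N * Jmat N)

def bitrev (m j : Nat) : Nat :=
  (List.range m).foldl (fun acc i => 2 * acc + (if j.testBit i then 1 else 0)) 0

def Rmat (m : Nat) : Matrix (Fin (2 ^ m)) (Fin (2 ^ m)) Real :=
  Matrix.of fun i j => if (i : Nat) = bitrev m (j : Nat) then 1 else 0



lemma keyDirichlet (θ : ℝ) (k : ℕ) :
    2 * Real.cos (θ/2) * (1/2 + ∑ j ∈ Finset.Icc 1 k, (-1:ℝ)^j * Real.cos (j*θ))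
      = (-1:ℝ)^k * Real.cos ((2*k+1)*(θ/2)) := by
  induction k with
  | zero => simp; ring
  | succ k ih =>
    rw [Finset.sum_Icc_succ_top (by omega)]
    have e := Real.cos_add_cos ((2*((k:ℝ)+1)+1)*(θ/2)) ((2*(k:ℝ)+1)*(θ/2))
    have h1 : ((2*((k:ℝ)+1)+1)*(θ/2) + (2*(k:ℝ)+1)*(θ/2))/2 = ((k:ℝ)+1)*θ := by ring
    have h2 : ((2*((k:ℝ)+1)+1)*(θ/2) - (2*(k:ℝ)+1)*(θ/2))/2 = θ/2 := by ring
    rw [h1, h2] at e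
    push_cast
    linear_combination ih + (-1:ℝ)^k * e

lemma Amat_apply (N : ℕ) (k n : Fin N) :
    Amat N k n = (-1 : Real) ^ ((k : Nat) + (n : Nat)) *
      (if (n : Nat) = 0 then Real.sqrt 2 / 2
       else if (n : Nat) ≤ (k : Nat) then 1 else 0) := by
  simp only [Amat, Jmat, Matrix.mul_diagonal, Matrix.diagonal_mul, trilU, Matrix.of_apply,
    pow_add]
  ring

theorem dctIV_eq_A_dctII_D (N : Nat) (hN : 0 < N) :
    dctIV N = Amat N * dctII N * Dmat N ∧
    (∀ k n : Fin N, Amat N k n = (-1 : Real) ^ ((k : Nat) + (n : Nat)) *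
      (if (n : Nat) = 0 then Real.sqrt 2 / 2
       else if (n : Nat) ≤ (k : Nat) then 1 else 0)) := by
  constructor
  · ext k n
    have hN' : (N:ℝ) ≠ 0 := by positivity
    set θ : ℝ := (2*(n:ℕ)+1)*π/(2*(N:ℝ)) with hθdef
    set s : ℝ := Real.sqrt (2/(N:ℝ)) with hsdef
    set g : ℕ → ℝ := fun j => (-1:ℝ)^((k:ℕ)+j) *
      (if j = 0 then Real.sqrt 2/2 else if j ≤ (k:ℕ) then 1 else 0) *
      (s * (if j = 0 then 1/Real.sqrt 2 else 1) *
        Real.cos (j*(2*(n:ℕ)+1)*π/(2*(N:ℝ)))) with hgdef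
    have hmul : (Amat N * dctII N * Dmat N) k n
        = (∑ j : Fin N, Amat N k j * dctII N j n) * (2*Real.cos ((2*(n:ℕ)+1)*π/(4*(N:ℝ)))) := by
      rw [Dmat, Matrix.mul_diagonal, Matrix.mul_apply]
    have hsum : ∑ j : Fin N, Amat N k j * dctII N j n = ∑ j ∈ Finset.range N, g j := by
      rw [← Fin.sum_univ_eq_sum_range]
      refine Finset.sum_congr rfl fun j _ => ?_
      rw [Amat_apply]
      simp only [dctII, Matrix.of_apply, hgdef, ← hsdef]
    have hsub : ∑ j ∈ Finset.range N, g j = ∑ j ∈ Finset.range (k+1), g j := by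
      refine (Finset.sum_subset (Finset.range_subset_range.2 (by omega)) fun j _ hj => ?_).symm
      simp only [Finset.mem_range, not_lt] at hj
      have h0 : j ≠ 0 := by omega
      have h1 : ¬ j ≤ (k:ℕ) := by omega
      simp [hgdef, h0, h1]
    have hsplit : ∑ j ∈ Finset.range (k+1), g j = g 0 + ∑ j ∈ Finset.Icc 1 (k:ℕ), g j := by
      rw [Finset.range_eq_Ico, Finset.sum_eq_sum_Ico_succ_bot (Nat.succ_pos _),
        Nat.succ_eq_add_one, Finset.Ico_add_one_right_eq_Icc]
    have hg0 : g 0 = s * ((-1:ℝ)^(k:ℕ)) * (1/2) := by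
      have h2 : Real.sqrt 2 ≠ 0 := by positivity
      simp only [hgdef]
      simp [Real.cos_zero]
      linear_combination ((-1:ℝ)^(k:ℕ) * s / 2) * (mul_inv_cancel₀ h2)
    have hIcc : ∑ j ∈ Finset.Icc 1 (k:ℕ), g j
        = s * (-1:ℝ)^(k:ℕ) * ∑ j ∈ Finset.Icc 1 (k:ℕ), (-1:ℝ)^j * Real.cos (j*θ) := by
      rw [Finset.mul_sum]
      refine Finset.sum_congr rfl fun j hj => ?_
      simp only [Finset.mem_Icc] at hj
      have h0 : j ≠ 0 := by omega
      have harg : (j:ℝ)*(2*(n:ℕ)+1)*π/(2*(N:ℝ)) = j*θ := by rw [hθdef]; ring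
      simp only [hgdef, h0, if_false, hj.2, if_true, harg, pow_add]
      ring
    have hhalf : (2*(n:ℕ)+1)*π/(4*(N:ℝ)) = θ/2 := by
      rw [hθdef, div_div]
      congr 1
      ring
    have key := keyDirichlet θ (k:ℕ)
    have hsq : ((-1:ℝ)^(k:ℕ)) * ((-1:ℝ)^(k:ℕ)) = 1 := by
      rw [← pow_add]
      exact Even.neg_one_pow ⟨k, rfl⟩
    have key2 : (-1:ℝ)^(k:ℕ) * (2 * Real.cos (θ/2) *
        (1/2 + ∑ j ∈ Finset.Icc 1 (k:ℕ), (-1:ℝ)^j * Real.cos (j*θ)))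
        = Real.cos ((2*(k:ℕ)+1)*(θ/2)) := by
      rw [key, ← mul_assoc, hsq, one_mul]
    have hargk : (2*(k:ℕ)+1)*(θ/2) = (2*(k:ℕ)+1)*(2*(n:ℕ)+1)*π/(4*(N:ℝ)) := by
      rw [hθdef]
      field_simp
      ring
    rw [hargk] at key2
    rw [hmul, hsum, hsub, hsplit, hg0, hIcc, hhalf]
    show s * Real.cos ((2*(k:ℕ)+1)*(2*(n:ℕ)+1)*π/(4*(N:ℝ))) = _
    linear_combination (-s) * key2
  · exact Amat_apply N
end

section
/- (Even-odd recursive decomposition of DCT-II) The 2N-point DCT-II matrix satisfies C^II_{2N} = (√2/2) ⬝ P_{2N} ⬝ blkdiag(C^II_N, J_N ⬝ S^IV_N) ⬝ [[I_N, Ī_N],[Ī_N, -I_N]], where P_{2N} is the perfect-shuffle permutation matrix sending input position n to output position 2n for n < N and to 2n mod 2N + 1 for n ≥ N. -/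
open Real Matrix

/-! ### Auxiliary lemmas -/

lemma reix_mul (N : Nat) (M M' : Matrix (Fin N ⊕ Fin N) (Fin N ⊕ Fin N) Real) :
    reix N M * reix N M' = reix N (M * M') := by
  simp only [reix, Matrix.reindex_apply, Matrix.submatrix_mul_equiv]

lemma esymm_left (N : Nat) (a : Fin N) (i : Fin (2 * N)) (h : (i : Nat) = a) :
    (finSumFinEquiv.trans (finCongr (two_mul N).symm)).symm i = Sum.inl a := by
  rw [Equiv.symm_apply_eq]
  ext
  simp [finSumFinEquiv_apply_left, h]

lemma esymm_right (N : Nat) (a : Fin N) (i : Fin (2 * N)) (h : (i : Nat) = N + a) :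
    (finSumFinEquiv.trans (finCongr (two_mul N).symm)).symm i = Sum.inr a := by
  rw [Equiv.symm_apply_eq]
  ext
  simp [finSumFinEquiv_apply_right, h, Nat.add_comm]

lemma reix_apply (N : Nat) (M : Matrix (Fin N ⊕ Fin N) (Fin N ⊕ Fin N) Real)
    (i j : Fin (2 * N)) :
    reix N M i j = M ((finSumFinEquiv.trans (finCongr (two_mul N).symm)).symm i)
      ((finSumFinEquiv.trans (finCongr (two_mul N).symm)).symm j) := rfl

lemma pshuffle_sigma (N : Nat) (b : Fin (2 * N)) (hb : ¬ (b : Nat) < N) :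
    (2 * (b : Nat)) % (2 * N) + 1 = 2 * ((b : Nat) - N) + 1 := by
  have h1 : 2 * (b : Nat) % (2 * N) = 2 * (b : Nat) - 2 * N := by
    rw [Nat.mod_eq_sub_mod (by omega)]
    exact Nat.mod_eq_of_lt (by omega)
  omega

lemma pShuffle_mul_even (N : Nat) (M : Matrix (Fin (2 * N)) (Fin (2 * N)) Real)
    (k n : Fin (2 * N)) (a : Nat) (ha : a < N) (hk : (k : Nat) = 2 * a) :
    (pShuffle N * M) k n = M ⟨a, by omega⟩ n := by
  rw [Matrix.mul_apply]
  rw [Finset.sum_eq_single (⟨a, by omega⟩ : Fin (2 * N))]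
  · simp [pShuffle, hk, ha]
  · intro b _ hb
    have hbv : (b : Nat) ≠ a := fun h => hb (Fin.ext h)
    rcases Nat.lt_or_ge (b : Nat) N with h | h
    · simp only [pShuffle, Matrix.of_apply, if_pos h, hk]
      rw [if_neg (by omega)]; ring
    · simp only [pShuffle, Matrix.of_apply, if_neg (by omega : ¬ (b:Nat) < N), hk]
      rw [pshuffle_sigma N b (by omega), if_neg (by omega)]; ring
  · intro h; exact absurd (Finset.mem_univ _) h

lemma pShuffle_mul_odd (N : Nat) (M : Matrix (Fin (2 * N)) (Fin (2 * N)) Real)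
    (k n : Fin (2 * N)) (a : Nat) (ha : a < N) (hk : (k : Nat) = 2 * a + 1) :
    (pShuffle N * M) k n = M ⟨N + a, by omega⟩ n := by
  rw [Matrix.mul_apply]
  rw [Finset.sum_eq_single (⟨N + a, by omega⟩ : Fin (2 * N))]
  · simp only [pShuffle, Matrix.of_apply]
    have hm : 2 * (N + a) % (2 * N) = 2 * a := by
      rw [Nat.mul_add, Nat.add_comm, Nat.add_mod_right]
      exact Nat.mod_eq_of_lt (by omega)
    rw [if_neg (by omega : ¬ (N + a) < N), hm, hk, if_pos rfl]; ring
  · intro b _ hb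
    have hbv : (b : Nat) ≠ N + a := fun h => hb (Fin.ext h)
    rcases Nat.lt_or_ge (b : Nat) N with h | h
    · simp only [pShuffle, Matrix.of_apply, if_pos h, hk]
      rw [if_neg (by omega)]; ring
    · simp only [pShuffle, Matrix.of_apply, if_neg (by omega : ¬ (b:Nat) < N), hk]
      rw [pshuffle_sigma N b (by omega), if_neg (by omega)]; ring
  · intro h; exact absurd (Finset.mem_univ _) h

lemma mul_exI (N : Nat) (M : Matrix (Fin N) (Fin N) Real) (i j : Fin N) :
    (M * exI N) i j = M i ⟨N - 1 - (j : Nat), by omega⟩ := by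
  have hj := j.isLt
  rw [Matrix.mul_apply]
  rw [Finset.sum_eq_single (⟨N - 1 - (j : Nat), by omega⟩ : Fin N)]
  · simp only [exI, Matrix.of_apply]
    rw [if_pos (by omega)]; ring
  · intro b _ hb
    have hbv : (b : Nat) ≠ N - 1 - (j : Nat) := fun h => hb (Fin.ext h)
    simp only [exI, Matrix.of_apply]
    rw [if_neg (by omega)]; ring
  · intro h; exact absurd (Finset.mem_univ _) h

lemma sqrt_half' : Real.sqrt (1/2) = Real.sqrt 2 / 2 := by
  rw [one_div, Real.sqrt_inv, inv_eq_one_div, div_eq_div_iff (by positivity) (by norm_num),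
    one_mul]
  exact (Real.mul_self_sqrt (by norm_num)).symm

lemma hscale (N : ℕ) (hN : 0 < N) :
    Real.sqrt (2 / (2 * (N:ℝ))) = Real.sqrt 2 / 2 * Real.sqrt (2 / N) := by
  have hNe : (N:ℝ) ≠ 0 := Nat.cast_ne_zero.mpr hN.ne'
  have h : 2 / (2 * (N:ℝ)) = (1/2) * (2/N) := by field_simp
  rw [h, Real.sqrt_mul (by norm_num), sqrt_half']

lemma sc1 (N a n : ℕ) (hN : 0 < N) (c : ℝ) :
    Real.sqrt (2/(2*(N:ℝ))) * c * Real.cos ((2*(a:ℝ)) * (2*(n:ℝ)+1) * π / (2*(2*N))) =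
    Real.sqrt 2/2 * (Real.sqrt (2/(N:ℝ)) * c * Real.cos ((a:ℝ)*(2*(n:ℝ)+1)*π/(2*N))) := by
  have hNe : (N:ℝ) ≠ 0 := Nat.cast_ne_zero.mpr hN.ne'
  have hang : (2*(a:ℝ)) * (2*(n:ℝ)+1) * π / (2*(2*N)) = (a:ℝ)*(2*(n:ℝ)+1)*π/(2*N) := by
    field_simp
  rw [hang, hscale N hN]; ring

lemma sc2 (N a m : ℕ) (hN : 0 < N) (hm : m < N) (c : ℝ) :
    Real.sqrt (2/(2*(N:ℝ))) * c * Real.cos ((2*(a:ℝ)) * (2*((N:ℝ)+m)+1) * π / (2*(2*N))) =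
    Real.sqrt 2/2 * (Real.sqrt (2/(N:ℝ)) * c *
      Real.cos ((a:ℝ)*(2*((N - 1 - m : ℕ):ℝ)+1)*π/(2*N))) := by
  have hNe : (N:ℝ) ≠ 0 := Nat.cast_ne_zero.mpr hN.ne'
  have hcast : ((N - 1 - m : ℕ):ℝ) = (N:ℝ) - ((m:ℝ)+1) := by
    have h : N - 1 - m = N - (m+1) := by omega
    rw [h, Nat.cast_sub (by omega)]; push_cast; ring
  have hL : (2*(a:ℝ)) * (2*((N:ℝ)+m)+1) * π / (2*(2*N)) =
      (a:ℝ)*π - (-((a:ℝ)*(2*(m:ℝ)+1)*π/(2*N))) := by field_simp; ring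
  have hR : (a:ℝ)*(2*((N:ℝ)-((m:ℝ)+1))+1)*π/(2*N) =
      (a:ℝ)*π - ((a:ℝ)*(2*(m:ℝ)+1)*π/(2*N)) := by field_simp; ring
  rw [hcast, hL, hR, Real.cos_nat_mul_pi_sub, Real.cos_nat_mul_pi_sub, Real.cos_neg,
    hscale N hN]
  ring

lemma sc3 (N a n : ℕ) (hN : 0 < N) (hn : n < N) :
    Real.sqrt (2/(2*(N:ℝ))) * Real.cos ((2*(a:ℝ)+1) * (2*(n:ℝ)+1) * π / (2*(2*N))) =
    Real.sqrt 2/2 * ((-1:ℝ)^a * (Real.sqrt (2/(N:ℝ)) *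
      Real.sin ((2*(a:ℝ)+1)*(2*((N - 1 - n : ℕ):ℝ)+1)*π/(4*N)))) := by
  have hNe : (N:ℝ) ≠ 0 := Nat.cast_ne_zero.mpr hN.ne'
  have hcast : ((N - 1 - n : ℕ):ℝ) = (N:ℝ) - ((n:ℝ)+1) := by
    have h : N - 1 - n = N - (n+1) := by omega
    rw [h, Nat.cast_sub (by omega)]; push_cast; ring
  have hR : (2*(a:ℝ)+1)*(2*((N:ℝ)-((n:ℝ)+1))+1)*π/(4*N) =
      (a:ℝ)*π - ((2*(a:ℝ)+1)*(2*(n:ℝ)+1)*π/(2*(2*N)) - π/2) := by field_simp; ring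
  have hsq : ((-1:ℝ))^(a*2) = 1 := by
    rw [pow_mul']; norm_num
  rw [hcast, hR, Real.sin_nat_mul_pi_sub,
    show (2*(a:ℝ)+1)*(2*(n:ℝ)+1)*π/(2*(2*N)) - π/2 =
      -(π/2 - (2*(a:ℝ)+1)*(2*(n:ℝ)+1)*π/(2*(2*N))) by ring,
    Real.sin_neg, Real.sin_pi_div_two_sub, hscale N hN]
  linear_combination (-(Real.sqrt 2 * Real.sqrt (2/(N:ℝ)) *
    Real.cos ((2*(a:ℝ)+1)*(2*(n:ℝ)+1)*π/(2*(2*N)))) / 2) * hsq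

lemma sc4 (N a m : ℕ) (hN : 0 < N) (hm : m < N) :
    Real.sqrt (2/(2*(N:ℝ))) * Real.cos ((2*(a:ℝ)+1) * (2*((N:ℝ)+m)+1) * π / (2*(2*N))) =
    Real.sqrt 2/2 * (-((-1:ℝ)^a * (Real.sqrt (2/(N:ℝ)) *
      Real.sin ((2*(a:ℝ)+1)*(2*(m:ℝ)+1)*π/(4*N))))) := by
  have hNe : (N:ℝ) ≠ 0 := Nat.cast_ne_zero.mpr hN.ne'
  have hL : (2*(a:ℝ)+1) * (2*((N:ℝ)+m)+1) * π / (2*(2*N)) =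
      (a:ℝ)*π - (-(π/2) - (2*(a:ℝ)+1)*(2*(m:ℝ)+1)*π/(4*N)) := by field_simp; ring
  rw [hL, Real.cos_nat_mul_pi_sub,
    show -(π/2) - (2*(a:ℝ)+1)*(2*(m:ℝ)+1)*π/(4*N) =
      -(π/2 + (2*(a:ℝ)+1)*(2*(m:ℝ)+1)*π/(4*N)) by ring,
    Real.cos_neg,
    show π/2 + (2*(a:ℝ)+1)*(2*(m:ℝ)+1)*π/(4*N) =
      π/2 - (-((2*(a:ℝ)+1)*(2*(m:ℝ)+1)*π/(4*N))) by ring,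
    Real.cos_pi_div_two_sub, Real.sin_neg, hscale N hN]
  ring

theorem dctII_even_odd_decomposition (N : Nat) (hN : 0 < N) :
    dctII (2 * N) =
      (Real.sqrt 2 / 2) •
        (pShuffle N * blk N (dctII N) (Jmat N * dstIV N) * butterfly N) := by
  have hBB : blk N (dctII N) (Jmat N * dstIV N) * butterfly N =
      reix N (Matrix.fromBlocks (dctII N) (dctII N * exI N)
        ((Jmat N * dstIV N) * exI N) (-(Jmat N * dstIV N))) := by
    rw [blk, butterfly, reix_mul, Matrix.fromBlocks_multiply]
    simp
  ext k n
  rw [Matrix.smul_apply, Matrix.mul_assoc, hBB, smul_eq_mul]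
  have hk2 := k.isLt
  have hn2 := n.isLt
  rcases Nat.even_or_odd (k : Nat) with ⟨a, ha⟩ | ⟨a, ha⟩
  · -- k even
    have hk : (k : Nat) = 2 * a := by omega
    have haN : a < N := by omega
    rw [pShuffle_mul_even N _ k n a haN hk, reix_apply,
      esymm_left N ⟨a, haN⟩ _ rfl]
    by_cases hn : (n : Nat) < N
    · rw [esymm_left N ⟨n, hn⟩ n rfl, Matrix.fromBlocks_apply₁₁]
      simp only [dctII, Matrix.of_apply]
      rw [hk, if_congr (by omega : 2*a = 0 ↔ a = 0) rfl rfl]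
      push_cast
      exact sc1 N a n hN _
    · rw [esymm_right N ⟨(n : Nat) - N, by omega⟩ n
        (by show (n : Nat) = N + ((n : Nat) - N); omega),
        Matrix.fromBlocks_apply₁₂, mul_exI]
      simp only [dctII, Matrix.of_apply]
      rw [hk, if_congr (by omega : 2*a = 0 ↔ a = 0) rfl rfl]
      have hn3 : ((n : Nat) : ℝ) = (N:ℝ) + (((n:Nat) - N : ℕ):ℝ) := by
        rw [Nat.cast_sub (by omega)]; ring
      rw [hn3]
      push_cast [hn3]
      exact sc2 N a ((n:Nat) - N) hN (by omega) _
  · -- k odd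
    have hk : (k : Nat) = 2 * a + 1 := by omega
    have haN : a < N := by omega
    rw [pShuffle_mul_odd N _ k n a haN hk, reix_apply,
      esymm_right N ⟨a, haN⟩ _ rfl]
    by_cases hn : (n : Nat) < N
    · rw [esymm_left N ⟨n, hn⟩ n rfl, Matrix.fromBlocks_apply₂₁, mul_exI]
      simp only [dctII, dstIV, Jmat, Matrix.diagonal_mul, Matrix.of_apply]
      rw [hk, if_neg (by omega), mul_one]
      push_cast
      exact sc3 N a n hN hn
    · rw [esymm_right N ⟨(n : Nat) - N, by omega⟩ n
        (by show (n : Nat) = N + ((n : Nat) - N); omega),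
        Matrix.fromBlocks_apply₂₂, Matrix.neg_apply]
      simp only [dctII, dstIV, Jmat, Matrix.diagonal_mul, Matrix.of_apply]
      rw [hk, if_neg (by omega), mul_one]
      have hn3 : ((n : Nat) : ℝ) = (N:ℝ) + (((n:Nat) - N : ℕ):ℝ) := by
        rw [Nat.cast_sub (by omega)]; ring
      rw [hn3]
      push_cast
      exact sc4 N a ((n:Nat) - N) hN (by omega)
end
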